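/- Let m_{P¹}, m_{P²} be l-dominant monomials and v¹, v² : I × ℤ → ℕ finitely supported, and set m¹ = m_{P¹} − ∑_{(i,s)} v¹(i,s)·A_{i,s} and m² = m_{P²} − ∑_{(i,s)} v²(i,s)·A_{i,s}. Then the two (finite) sums ∑_{(i,s) ∈ I × ℤ} ( v¹(i,s+1)·m²(i,s) + m_{P¹}(i,s+1)·v²(i,s) ) and ∑_{(i,s) ∈ I × ℤ} ( m¹(i,s)·v²(i,s−1) + v¹(i,s)·m_{P²}(i,s−1) ) are equal; their common value is the quantity d(m¹, m_{P¹}; m², m_{P²}). -/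
import Mathlib


open Finsupp

/-- The exponent function of the monomial
`A_{i,q^s} = Y_{i,q^{s+1}} Y_{i,q^{s-1}} ∏_{j ≠ i} Y_{j,q^s}^{C j i}`. -/
noncomputable def Amon {I : Type*} [Fintype I] [DecidableEq I]
    (C : I → I → ℤ) (i : I) (s : ℤ) : (I × ℤ) →₀ ℤ :=
  Finsupp.single (i, s + 1) 1 + Finsupp.single (i, s - 1) 1 +
    ∑ j ∈ Finset.univ.erase i, Finsupp.single (j, s) (C j i)

lemma Amon_apply {I : Type*} [Fintype I] [DecidableEq I]
    (C : I → I → ℤ) (i : I) (s : ℤ) (j : I) (u : ℤ) :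
    Amon C i s (j, u) = (if j = i ∧ u = s + 1 then 1 else 0)
      + (if j = i ∧ u = s - 1 then 1 else 0)
      + (if j ≠ i ∧ u = s then C j i else 0) := by
  have hsum : (∑ k ∈ Finset.univ.erase i, Finsupp.single (k, s) (C k i)) (j, u)
      = if j ≠ i ∧ u = s then C j i else 0 := by
    rw [Finsupp.finset_sum_apply]
    simp only [Finsupp.single_apply, Prod.mk.injEq]
    by_cases hsu : u = s
    · subst hsu
      simp only [and_true, eq_comm (a := j)]
      rw [Finset.sum_ite_eq' (Finset.univ.erase i) j (fun k => C k i)]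
      simp [Finset.mem_erase, ne_comm]
    · have h : ∀ k : I, ¬(k = j ∧ s = u) := fun k h => hsu h.2.symm
      simp [h, hsu]
  simp only [Amon, Finsupp.add_apply, hsum, Finsupp.single_apply, Prod.mk.injEq,
    eq_comm (a := j), eq_comm (a := u)]

lemma Amon_swap {I : Type*} [Fintype I] [DecidableEq I]
    (C : I → I → ℤ) (hsym : ∀ i j, C i j = C j i) (i : I) (s : ℤ) (j : I) (t : ℤ) :
    Amon C j t (i, s - 1) = Amon C i s (j, t + 1) := by
  rw [Amon_apply, Amon_apply]
  by_cases hij : i = j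
  · subst hij
    simp only [ne_eq, not_true, false_and, if_false, true_and, if_true, eq_self_iff_true]
    have h1 : (s - 1 = t + 1) ↔ (t + 1 = s - 1) := by omega
    have h2 : (s - 1 = t - 1) ↔ (t + 1 = s + 1) := by omega
    simp [h1, h2]; ring
  · have hji : ¬ j = i := fun h => hij h.symm
    have h3 : (s - 1 = t) ↔ (t + 1 = s) := by omega
    simp [hij, hji, h3, hsym i j]
def shiftE (I : Type*) : (I × ℤ) ≃ (I × ℤ) where
  toFun p := (p.1, p.2 + 1)
  invFun p := (p.1, p.2 - 1)
  left_inv p := by simp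
  right_inv p := by simp

/-- The two expressions defining `d(m¹, m_{P¹}; m², m_{P²})` agree:
`∑ (v¹(i,s+1)·m²(i,s) + m_{P¹}(i,s+1)·v²(i,s))
  = ∑ (m¹(i,s)·v²(i,s-1) + v¹(i,s)·m_{P²}(i,s-1))`. -/
theorem d_well_defined {I : Type*} [Fintype I] [DecidableEq I]
    (C : I → I → ℤ)
    (hsym : ∀ i j, C i j = C j i)
    (hdiag : ∀ i, C i i = 2)
    (hoff : ∀ i j, i ≠ j → C i j = 0 ∨ C i j = -1)
    (mP1 mP2 : (I × ℤ) →₀ ℤ)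
    (hP1 : ∀ p : I × ℤ, 0 ≤ mP1 p) (hP2 : ∀ p : I × ℤ, 0 ≤ mP2 p)
    (v1 v2 : (I × ℤ) →₀ ℕ)
    (m1 m2 : (I × ℤ) →₀ ℤ)
    (hm1 : m1 = mP1 - v1.sum fun p n => (n : ℤ) • Amon C p.1 p.2)
    (hm2 : m2 = mP2 - v2.sum fun p n => (n : ℤ) • Amon C p.1 p.2) :
    ∑ᶠ p : I × ℤ, ((v1 (p.1, p.2 + 1) : ℤ) * m2 p + mP1 (p.1, p.2 + 1) * (v2 p : ℤ))
      = ∑ᶠ p : I × ℤ, (m1 p * (v2 (p.1, p.2 - 1) : ℤ) + (v1 p : ℤ) * mP2 (p.1, p.2 - 1)) := by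
  classical
  subst hm1 hm2
  set S1 : (I × ℤ) →₀ ℤ := v1.sum fun p n => (n : ℤ) • Amon C p.1 p.2 with hS1
  set S2 : (I × ℤ) →₀ ℤ := v2.sum fun p n => (n : ℤ) • Amon C p.1 p.2 with hS2
  have hS1app : ∀ p, S1 p = ∑ q ∈ v1.support, (v1 q : ℤ) * Amon C q.1 q.2 p := by
    intro p
    rw [hS1, Finsupp.sum_apply]
    simp [Finsupp.sum, Finsupp.smul_apply]
  have hS2app : ∀ p, S2 p = ∑ q ∈ v2.support, (v2 q : ℤ) * Amon C q.1 q.2 p := by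
    intro p
    rw [hS2, Finsupp.sum_apply]
    simp [Finsupp.sum, Finsupp.smul_apply]
  -- finiteness of supports
  have hfin1 : (Function.support fun p : I × ℤ =>
      (v1 (p.1, p.2 + 1) : ℤ) * mP2 p + mP1 (p.1, p.2 + 1) * (v2 p : ℤ)).Finite := by
    refine Set.Finite.subset (Set.Finite.union mP2.support.finite_toSet v2.support.finite_toSet) ?_
    intro p hp
    simp only [Function.mem_support] at hp
    by_contra h
    simp only [Set.mem_union, Finset.mem_coe, Finsupp.mem_support_iff, not_or, not_not] at h
    apply hp
    rw [h.1, h.2]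
    ring
  have hfin2 : (Function.support fun p : I × ℤ =>
      (v1 (p.1, p.2 + 1) : ℤ) * S2 p).Finite := by
    refine Set.Finite.subset S2.support.finite_toSet ?_
    intro p hp
    simp only [Function.mem_support] at hp
    simp only [Finset.mem_coe, Finsupp.mem_support_iff]
    intro h
    apply hp
    rw [h]; ring
  have hfin3 : (Function.support fun p : I × ℤ =>
      mP1 p * (v2 (p.1, p.2 - 1) : ℤ) + (v1 p : ℤ) * mP2 (p.1, p.2 - 1)).Finite := by
    refine Set.Finite.subset (Set.Finite.union mP1.support.finite_toSet v1.support.finite_toSet) ?_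
    intro p hp
    simp only [Function.mem_support] at hp
    by_contra h
    simp only [Set.mem_union, Finset.mem_coe, Finsupp.mem_support_iff, not_or, not_not] at h
    apply hp
    rw [h.1, h.2]
    push_cast
    ring
  have hfin4 : (Function.support fun p : I × ℤ =>
      S1 p * (v2 (p.1, p.2 - 1) : ℤ)).Finite := by
    refine Set.Finite.subset S1.support.finite_toSet ?_
    intro p hp
    simp only [Function.mem_support] at hp
    simp only [Finset.mem_coe, Finsupp.mem_support_iff]
    intro h
    apply hp
    rw [h]; ring
  -- split both sides
  have hL : ∑ᶠ p : I × ℤ, ((v1 (p.1, p.2 + 1) : ℤ) * (mP2 - S2) p + mP1 (p.1, p.2 + 1) * (v2 p : ℤ))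
      = (∑ᶠ p : I × ℤ, ((v1 (p.1, p.2 + 1) : ℤ) * mP2 p + mP1 (p.1, p.2 + 1) * (v2 p : ℤ)))
        - ∑ᶠ p : I × ℤ, (v1 (p.1, p.2 + 1) : ℤ) * S2 p := by
    rw [← finsum_sub_distrib hfin1 hfin2]
    congr 1
    funext p
    rw [Finsupp.sub_apply]
    ring
  have hR : ∑ᶠ p : I × ℤ, ((mP1 - S1) p * (v2 (p.1, p.2 - 1) : ℤ) + (v1 p : ℤ) * mP2 (p.1, p.2 - 1))
      = (∑ᶠ p : I × ℤ, (mP1 p * (v2 (p.1, p.2 - 1) : ℤ) + (v1 p : ℤ) * mP2 (p.1, p.2 - 1)))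
        - ∑ᶠ p : I × ℤ, S1 p * (v2 (p.1, p.2 - 1) : ℤ) := by
    rw [← finsum_sub_distrib hfin3 hfin4]
    congr 1
    funext p
    rw [Finsupp.sub_apply]
    ring
  rw [hL, hR]
  -- the "B" terms agree by reindexing
  have hB : (∑ᶠ p : I × ℤ, ((v1 (p.1, p.2 + 1) : ℤ) * mP2 p + mP1 (p.1, p.2 + 1) * (v2 p : ℤ)))
      = ∑ᶠ p : I × ℤ, (mP1 p * (v2 (p.1, p.2 - 1) : ℤ) + (v1 p : ℤ) * mP2 (p.1, p.2 - 1)) := by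
    have := finsum_comp_equiv (shiftE I)
      (f := fun p : I × ℤ => mP1 p * (v2 (p.1, p.2 - 1) : ℤ) + (v1 p : ℤ) * mP2 (p.1, p.2 - 1))
    rw [← this]
    congr 1
    funext p
    simp only [shiftE, Equiv.coe_fn_mk, add_sub_cancel_right]
    ring
  rw [hB]
  congr 1
  -- the core identity
  have hLcore : (∑ᶠ p : I × ℤ, (v1 (p.1, p.2 + 1) : ℤ) * S2 p)
      = ∑ p ∈ v1.support, ∑ q ∈ v2.support,
          (v1 p : ℤ) * ((v2 q : ℤ) * Amon C q.1 q.2 (p.1, p.2 - 1)) := by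
    have h1 := finsum_comp_equiv (shiftE I)
      (f := fun p : I × ℤ => (v1 p : ℤ) * S2 (p.1, p.2 - 1))
    have h2 : (∑ᶠ p : I × ℤ, (v1 p : ℤ) * S2 (p.1, p.2 - 1))
        = ∑ p ∈ v1.support, (v1 p : ℤ) * S2 (p.1, p.2 - 1) := by
      refine finsum_eq_sum_of_support_subset _ ?_
      intro p hp
      simp only [Function.mem_support] at hp
      simp only [Finset.mem_coe, Finsupp.mem_support_iff]
      intro h
      apply hp
      rw [h]
      push_cast
      ring
    calc (∑ᶠ p : I × ℤ, (v1 (p.1, p.2 + 1) : ℤ) * S2 p)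
        = ∑ᶠ p : I × ℤ, (v1 p : ℤ) * S2 (p.1, p.2 - 1) := by
          rw [← h1]
          congr 1
          funext p
          simp only [shiftE, Equiv.coe_fn_mk, add_sub_cancel_right]
      _ = ∑ p ∈ v1.support, (v1 p : ℤ) * S2 (p.1, p.2 - 1) := h2
      _ = _ := by
          refine Finset.sum_congr rfl fun p _ => ?_
          rw [hS2app, Finset.mul_sum]
  have hRcore : (∑ᶠ p : I × ℤ, S1 p * (v2 (p.1, p.2 - 1) : ℤ))
      = ∑ p ∈ v2.support, ∑ q ∈ v1.support,
          (v1 q : ℤ) * ((v2 p : ℤ) * Amon C q.1 q.2 (p.1, p.2 + 1)) := by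
    have h1 := finsum_comp_equiv (shiftE I)
      (f := fun p : I × ℤ => S1 p * (v2 (p.1, p.2 - 1) : ℤ))
    have h2 : (∑ᶠ p : I × ℤ, S1 (p.1, p.2 + 1) * (v2 p : ℤ))
        = ∑ p ∈ v2.support, S1 (p.1, p.2 + 1) * (v2 p : ℤ) := by
      refine finsum_eq_sum_of_support_subset _ ?_
      intro p hp
      simp only [Function.mem_support] at hp
      simp only [Finset.mem_coe, Finsupp.mem_support_iff]
      intro h
      apply hp
      rw [h]
      push_cast
      ring
    calc (∑ᶠ p : I × ℤ, S1 p * (v2 (p.1, p.2 - 1) : ℤ))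
        = ∑ᶠ p : I × ℤ, S1 (p.1, p.2 + 1) * (v2 p : ℤ) := by
          rw [← h1]
          congr 1
          funext p
          simp only [shiftE, Equiv.coe_fn_mk, add_sub_cancel_right]
      _ = ∑ p ∈ v2.support, S1 (p.1, p.2 + 1) * (v2 p : ℤ) := h2
      _ = _ := by
          refine Finset.sum_congr rfl fun p _ => ?_
          rw [hS1app, Finset.sum_mul]
          refine Finset.sum_congr rfl fun q _ => ?_
          ring
  rw [hLcore, hRcore, Finset.sum_comm]
  refine Finset.sum_congr rfl fun q _ => Finset.sum_congr rfl fun p _ => ?_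
  rw [Amon_swap C hsym p.1 p.2 q.1 q.2]
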